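/- Tarski's Editors Property holds in SL₂(ℕ): if α, β, γ, δ ∈ SL₂(ℕ) satisfy αβ = γδ, then there exists η ∈ SL₂(ℕ) such that either (α = γη and ηβ = δ) or (αη = γ and β = ηδ). -/
import Mathlib

open Matrix

namespace SL2Ed

def L : Matrix (Fin 2) (Fin 2) ℤ := !![1,0;1,1]
def R : Matrix (Fin 2) (Fin 2) ℤ := !![1,1;0,1]

def es (M : Matrix (Fin 2) (Fin 2) ℤ) : ℕ := (M 0 0 + M 0 1 + M 1 0 + M 1 1).toNat

lemma mul_nn {A B : Matrix (Fin 2) (Fin 2) ℤ} (hA : ∀ i j, 0 ≤ A i j)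
    (hB : ∀ i j, 0 ≤ B i j) : ∀ i j, 0 ≤ (A * B) i j := by
  intro i j
  rw [Matrix.mul_apply]
  exact Finset.sum_nonneg fun k _ => mul_nonneg (hA i k) (hB k j)

lemma Li_L : (!![1,0;-1,1] : Matrix (Fin 2) (Fin 2) ℤ) * L = 1 := by
  simp [L, Matrix.mul_fin_two, Matrix.one_fin_two]

lemma Ri_R : (!![1,-1;0,1] : Matrix (Fin 2) (Fin 2) ℤ) * R = 1 := by
  simp [R, Matrix.mul_fin_two, Matrix.one_fin_two]

lemma decomp (M : Matrix (Fin 2) (Fin 2) ℤ) (h : ∀ i j, 0 ≤ M i j)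
    (hd : M.det = 1) (hne : M ≠ 1) :
    (∃ M', (∀ i j, 0 ≤ M' i j) ∧ M'.det = 1 ∧ M = L * M' ∧ es M' < es M) ∨
    (∃ M', (∀ i j, 0 ≤ M' i j) ∧ M'.det = 1 ∧ M = R * M' ∧ es M' < es M) := by
  obtain ⟨a, b, c, d, heta⟩ : ∃ a b c d, M = !![a,b;c,d] :=
    ⟨_, _, _, _, Matrix.eta_fin_two M⟩
  subst heta
  have ha : 0 ≤ a := by simpa using h 0 0
  have hb : 0 ≤ b := by simpa using h 0 1
  have hc : 0 ≤ c := by simpa using h 1 0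
  have hd2 : 0 ≤ d := by simpa using h 1 1
  rw [Matrix.det_fin_two_of] at hd
  by_cases h1 : a ≤ c ∧ b ≤ d
  · left
    refine ⟨!![a,b;c-a,d-b], ?_, ?_, ?_, ?_⟩
    · intro i j; fin_cases i <;> fin_cases j <;> simp <;> omega
    · rw [Matrix.det_fin_two_of]; linear_combination hd
    · rw [L, Matrix.mul_fin_two]; norm_num
    · have hab : 1 ≤ a + b := by
        by_contra hcon
        have h0 : a = 0 ∧ b = 0 := by omega
        rw [h0.1, h0.2] at hd; simp at hd
      simp only [es]; simp; omega
  · by_cases h2 : c ≤ a ∧ d ≤ b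
    · right
      refine ⟨!![a-c,b-d;c,d], ?_, ?_, ?_, ?_⟩
      · intro i j; fin_cases i <;> fin_cases j <;> simp <;> omega
      · rw [Matrix.det_fin_two_of]; linear_combination hd
      · rw [R, Matrix.mul_fin_two]; norm_num
      · have hcd : 1 ≤ c + d := by
          by_contra hcon
          have h0 : c = 0 ∧ d = 0 := by omega
          rw [h0.1, h0.2] at hd; simp at hd
        simp only [es]; simp; omega
    · exfalso
      push_neg at h1 h2
      rcases lt_trichotomy a c with hac | hac | hac
      · have hdb : d < b := h1 hac.le
        nlinarith
      · subst hac
        have hdb : d < b := h1 le_rfl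
        have hbd : b < d := h2 le_rfl
        omega
      · have hbd : b < d := h2 hac.le
        have key : b + c + 1 ≤ a * d - b * c := by nlinarith
        have hb0 : b = 0 := by omega
        have hc0 : c = 0 := by omega
        rw [hb0, hc0] at hd
        simp at hd
        have had : a = 1 ∧ d = 1 := by
          rcases Int.mul_eq_one_iff_eq_one_or_neg_one.mp hd with ⟨h', h''⟩ | ⟨h', h''⟩
          · exact ⟨h', h''⟩
          · omega
        apply hne
        rw [hb0, hc0, had.1, had.2, Matrix.one_fin_two]

lemma no_mix {A B P : Matrix (Fin 2) (Fin 2) ℤ}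
    (hA : ∀ i j, 0 ≤ A i j) (hB : ∀ i j, 0 ≤ B i j)
    (hPL : P = L * A) (hPR : P = R * B) (hdP : P.det = 1) : False := by
  have eL : ∀ j, P 0 j = A 0 j ∧ P 1 j = A 0 j + A 1 j := by
    intro j
    rw [hPL]
    constructor <;> simp [L, Matrix.mul_apply, Fin.sum_univ_two]
  have eR : ∀ j, P 0 j = B 0 j + B 1 j ∧ P 1 j = B 1 j := by
    intro j
    rw [hPR]
    constructor <;> simp [R, Matrix.mul_apply, Fin.sum_univ_two]
  have heq : ∀ j, P 0 j = P 1 j := by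
    intro j
    have h1 := (eL j).1; have h2 := (eL j).2
    have h3 := (eR j).1; have h4 := (eR j).2
    have := hA 1 j; have := hB 0 j
    omega
  rw [Matrix.det_fin_two, ← heq 0, ← heq 1] at hdP
  nlinarith [hdP]

lemma key : ∀ n : ℕ, ∀ α β γ δ : Matrix (Fin 2) (Fin 2) ℤ,
    (∀ i j, 0 ≤ α i j) → (∀ i j, 0 ≤ β i j) → (∀ i j, 0 ≤ γ i j) → (∀ i j, 0 ≤ δ i j) →
    α.det = 1 → β.det = 1 → γ.det = 1 → δ.det = 1 →
    α * β = γ * δ → es α ≤ n →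
    ∃ η : Matrix (Fin 2) (Fin 2) ℤ, (∀ i j, 0 ≤ η i j) ∧ η.det = 1 ∧
      ((α = γ * η ∧ η * β = δ) ∨ (α * η = γ ∧ β = η * δ)) := by
  intro n
  induction n with
  | zero =>
    intro α β γ δ hα hβ hγ hδ hdα hdβ hdγ hdδ hmul hes
    exfalso
    have h00 := hα 0 0; have h01 := hα 0 1; have h10 := hα 1 0; have h11 := hα 1 1
    have : α 0 0 = 0 ∧ α 1 1 = 0 ∧ α 0 1 = 0 ∧ α 1 0 = 0 := by
      simp only [es] at hes; omega
    rw [Matrix.det_fin_two, this.1, this.2.2.1] at hdα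
    simp at hdα
  | succ n ih =>
    intro α β γ δ hα hβ hγ hδ hdα hdβ hdγ hdδ hmul hes
    by_cases hα1 : α = 1
    · exact ⟨γ, hγ, hdγ, Or.inr ⟨by rw [hα1, one_mul], by rw [← hmul, hα1, one_mul]⟩⟩
    by_cases hγ1 : γ = 1
    · exact ⟨α, hα, hdα, Or.inl ⟨by rw [hγ1, one_mul], by rw [hmul, hγ1, one_mul]⟩⟩
    have hdP : (α * β).det = 1 := by rw [Matrix.det_mul, hdα, hdβ, one_mul]
    rcases decomp α hα hdα hα1 with ⟨α', hα', hdα', hαeq, hαlt⟩ | ⟨α', hα', hdα', hαeq, hαlt⟩ <;>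
      rcases decomp γ hγ hdγ hγ1 with ⟨γ', hγ', hdγ', hγeq, _⟩ | ⟨γ', hγ', hdγ', hγeq, _⟩
    · -- both L
      have hcan : α' * β = γ' * δ := by
        have h1 : L * (α' * β) = L * (γ' * δ) := by
          rw [← mul_assoc, ← mul_assoc, ← hαeq, ← hγeq, hmul]
        calc α' * β = (!![1,0;-1,1] * L) * (α' * β) := by rw [Li_L, one_mul]
          _ = !![1,0;-1,1] * (L * (α' * β)) := by rw [mul_assoc]
          _ = !![1,0;-1,1] * (L * (γ' * δ)) := by rw [h1]
          _ = (!![1,0;-1,1] * L) * (γ' * δ) := by rw [mul_assoc]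
          _ = γ' * δ := by rw [Li_L, one_mul]
      obtain ⟨η, hη, hdη, hcase⟩ := ih α' β γ' δ hα' hβ hγ' hδ hdα' hdβ hdγ' hdδ hcan (by omega)
      refine ⟨η, hη, hdη, ?_⟩
      rcases hcase with ⟨h1, h2⟩ | ⟨h1, h2⟩
      · exact Or.inl ⟨by rw [hαeq, hγeq, h1, mul_assoc], h2⟩
      · exact Or.inr ⟨by rw [hαeq, hγeq, ← h1, mul_assoc], h2⟩
    · -- α L, γ R : contradiction
      exact absurd hdP (by
        have := no_mix (mul_nn hα' hβ) (mul_nn hγ' hδ)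
          (P := α * β) (by rw [hαeq, mul_assoc]) (by rw [hmul, hγeq, mul_assoc]) 
        exact fun h => this h)
    · -- α R, γ L : contradiction
      exact absurd hdP (by
        have := no_mix (mul_nn hγ' hδ) (mul_nn hα' hβ)
          (P := α * β) (by rw [hmul, hγeq, mul_assoc]) (by rw [hαeq, mul_assoc])
        exact fun h => this h)
    · -- both R
      have hcan : α' * β = γ' * δ := by
        have h1 : R * (α' * β) = R * (γ' * δ) := by
          rw [← mul_assoc, ← mul_assoc, ← hαeq, ← hγeq, hmul]
        calc α' * β = (!![1,-1;0,1] * R) * (α' * β) := by rw [Ri_R, one_mul]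
          _ = !![1,-1;0,1] * (R * (α' * β)) := by rw [mul_assoc]
          _ = !![1,-1;0,1] * (R * (γ' * δ)) := by rw [h1]
          _ = (!![1,-1;0,1] * R) * (γ' * δ) := by rw [mul_assoc]
          _ = γ' * δ := by rw [Ri_R, one_mul]
      obtain ⟨η, hη, hdη, hcase⟩ := ih α' β γ' δ hα' hβ hγ' hδ hdα' hdβ hdγ' hdδ hcan (by omega)
      refine ⟨η, hη, hdη, ?_⟩
      rcases hcase with ⟨h1, h2⟩ | ⟨h1, h2⟩
      · exact Or.inl ⟨by rw [hαeq, hγeq, h1, mul_assoc], h2⟩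
      · exact Or.inr ⟨by rw [hαeq, hγeq, ← h1, mul_assoc], h2⟩

end SL2Ed

/-- Tarski's Editors Property in SL₂(ℕ): if αβ = γδ then some η in SL₂(ℕ)
edits one decomposition into the other. -/
theorem sl2_nat_editors_property
    (α β γ δ : Matrix (Fin 2) (Fin 2) ℤ)
    (hα : ∀ i j, 0 ≤ α i j) (hβ : ∀ i j, 0 ≤ β i j)
    (hγ : ∀ i j, 0 ≤ γ i j) (hδ : ∀ i j, 0 ≤ δ i j)
    (hdα : α.det = 1) (hdβ : β.det = 1) (hdγ : γ.det = 1) (hdδ : δ.det = 1)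
    (hmul : α * β = γ * δ) :
    ∃ η : Matrix (Fin 2) (Fin 2) ℤ, (∀ i j, 0 ≤ η i j) ∧ η.det = 1 ∧
      ((α = γ * η ∧ η * β = δ) ∨ (α * η = γ ∧ β = η * δ)) := by
  exact SL2Ed.key (SL2Ed.es α) α β γ δ hα hβ hγ hδ hdα hdβ hdγ hdδ hmul le_rfl
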